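/- Let F be a d×d real matrix and R ∈ SO(d). Then the Frobenius norm |(F Rᵀ)ᵀ + F Rᵀ)/2 − Id| equals dist(F, SO(d)) + O(|F − R|²); more precisely, there is a universal constant C > 0 such that ||sym(F Rᵀ) − Id| − dist(F, SO(d))| ≤ C |F − R|², where sym(G) = (G + Gᵀ)/2. -/
import Mathlib


open Matrix

attribute [local instance] Matrix.frobeniusNormedAddCommGroup Matrix.frobeniusNormedSpace
  Matrix.frobeniusNormedRing Matrix.frobeniusNormedAlgebra


/-- Frobenius norm of a real matrix. -/
noncomputable def frobNorm {d : ℕ} (F : Matrix (Fin d) (Fin d) ℝ) : ℝ :=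
  Real.sqrt (∑ i, ∑ j, F i j ^ 2)

/-- The special orthogonal group `SO(d)`. -/
def SO (d : ℕ) : Set (Matrix (Fin d) (Fin d) ℝ) :=
  {R | R * Rᵀ = 1 ∧ R.det = 1}

/-- Frobenius distance of `F` to `SO(d)`. -/
noncomputable def distSO {d : ℕ} (F : Matrix (Fin d) (Fin d) ℝ) : ℝ :=
  sInf ((fun Q => frobNorm (F - Q)) '' SO d)

variable {d : ℕ}

lemma frobNorm_eq (F : Matrix (Fin d) (Fin d) ℝ) : frobNorm F = ‖F‖ := by
  rw [frobNorm, Matrix.frobenius_norm_def, Real.sqrt_eq_rpow]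
  congr 1
  simp [Real.norm_eq_abs, Real.rpow_two, sq_abs]

lemma frob_sq (M : Matrix (Fin d) (Fin d) ℝ) : ‖M‖ ^ 2 = Matrix.trace (M * Mᵀ) := by
  rw [Matrix.frobenius_norm_def, ← Real.rpow_natCast _ 2, ← Real.rpow_mul (by positivity)]
  norm_num
  simp [Matrix.trace, Matrix.mul_apply, Matrix.diag, sq]

lemma frob_orth_right {A R : Matrix (Fin d) (Fin d) ℝ} (hR : R * Rᵀ = 1) :
    ‖A * Rᵀ‖ = ‖A‖ := by
  have hR' : Rᵀ * R = 1 := mul_eq_one_comm.mp hR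
  have h2 : ‖A * Rᵀ‖ ^ 2 = ‖A‖ ^ 2 := by
    rw [frob_sq, frob_sq, Matrix.transpose_mul, Matrix.transpose_transpose]
    congr 1
    calc A * Rᵀ * (R * Aᵀ) = A * (Rᵀ * R) * Aᵀ := by noncomm_ring
    _ = A * Aᵀ := by rw [hR']; noncomm_ring
  calc ‖A * Rᵀ‖ = √(‖A * Rᵀ‖ ^ 2) := (Real.sqrt_sq (norm_nonneg _)).symm
  _ = √(‖A‖ ^ 2) := by rw [h2]
  _ = ‖A‖ := Real.sqrt_sq (norm_nonneg _)

lemma sym_contract (M : Matrix (Fin d) (Fin d) ℝ) :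
    ‖(1 / 2 : ℝ) • (M + Mᵀ)‖ ≤ ‖M‖ := by
  calc ‖(1 / 2 : ℝ) • (M + Mᵀ)‖ = (1/2) * ‖M + Mᵀ‖ := by
        rw [norm_smul]; norm_num
  _ ≤ (1/2) * (‖M‖ + ‖Mᵀ‖) := by
        have := norm_add_le M Mᵀ; nlinarith
  _ = ‖M‖ := by rw [Matrix.frobenius_norm_transpose]; ring

lemma SO.mul {P Q : Matrix (Fin d) (Fin d) ℝ} (hP : P ∈ SO d) (hQ : Q ∈ SO d) :
    P * Q ∈ SO d := by
  obtain ⟨hP1, hP2⟩ := hP; obtain ⟨hQ1, hQ2⟩ := hQ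
  constructor
  · rw [Matrix.transpose_mul]
    calc P * Q * (Qᵀ * Pᵀ) = P * (Q * Qᵀ) * Pᵀ := by noncomm_ring
    _ = 1 := by rw [hQ1, mul_one, hP1]
  · rw [Matrix.det_mul, hP2, hQ2, mul_one]

lemma SO.transpose {R : Matrix (Fin d) (Fin d) ℝ} (hR : R ∈ SO d) : Rᵀ ∈ SO d := by
  obtain ⟨h1, h2⟩ := hR
  exact ⟨by rw [Matrix.transpose_transpose]; exact mul_eq_one_comm.mp h1,
    by rw [Matrix.det_transpose]; exact h2⟩

lemma symSO {P : Matrix (Fin d) (Fin d) ℝ} (hP : P ∈ SO d) :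
    ‖(1 / 2 : ℝ) • (P + Pᵀ) - 1‖ ≤ (1/2) * ‖P - 1‖ ^ 2 := by
  have hid : (1 / 2 : ℝ) • (P + Pᵀ) - 1 = -((1 / 2 : ℝ) • ((1 - P) * (1 - P)ᵀ)) := by
    rw [Matrix.transpose_sub, Matrix.transpose_one, sub_mul, mul_sub, mul_sub, one_mul, mul_one,
      one_mul, hP.1]
    module
  rw [hid, norm_neg, norm_smul]
  have h1 : ‖(1 - P) * (1 - P)ᵀ‖ ≤ ‖1 - P‖ * ‖(1 - P)ᵀ‖ := norm_mul_le _ _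
  rw [Matrix.frobenius_norm_transpose] at h1
  have h2 : ‖(1 : Matrix (Fin d) (Fin d) ℝ) - P‖ = ‖P - 1‖ := norm_sub_rev _ _
  rw [h2] at h1
  rw [Real.norm_eq_abs, abs_of_pos (by norm_num : (0:ℝ) < 1/2), pow_two]
  linarith

lemma exists_inv {A : Matrix (Fin d) (Fin d) ℝ} (h : ‖A‖ < 1) :
    ∃ X, (1 - A) * X = 1 ∧ X * (1 - A) = 1 := by
  refine ⟨↑(Units.oneSub A h)⁻¹, ?_, ?_⟩
  · have := (Units.oneSub A h).mul_inv
    rwa [Units.val_oneSub] at this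
  · have := (Units.oneSub A h).inv_mul
    rwa [Units.val_oneSub] at this

lemma cayley {A : Matrix (Fin d) (Fin d) ℝ} (hskew : Aᵀ = -A) (hn : ‖A‖ ≤ 1/2) :
    ∃ Q₀ ∈ SO d, ‖Q₀ - 1 - (A + A)‖ ≤ 4 * ‖A‖ ^ 2 := by
  have hn1 : ‖A‖ < 1 := by linarith
  have hn1' : ‖-A‖ < 1 := by rwa [norm_neg]
  obtain ⟨Ci, hCi1, hCi2⟩ := exists_inv hn1
  obtain ⟨Bi, hBi1, hBi2⟩ := exists_inv hn1'
  rw [sub_neg_eq_add] at hBi1 hBi2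
  set B : Matrix (Fin d) (Fin d) ℝ := 1 + A with hB
  set C : Matrix (Fin d) (Fin d) ℝ := 1 - A with hC
  have hBT : Bᵀ = C := by rw [hB, hC, Matrix.transpose_add, Matrix.transpose_one, hskew]; abel
  have hCT : Cᵀ = B := by rw [hB, hC, Matrix.transpose_sub, Matrix.transpose_one, hskew]; abel
  have hcomm : C * B = B * C := by rw [hB, hC]; noncomm_ring
  set Q₀ : Matrix (Fin d) (Fin d) ℝ := B * Ci with hQ₀
  have hCiT : Ciᵀ = Bi := by
    have h1 : Ciᵀ * B = 1 := by
      rw [← hCT, ← Matrix.transpose_mul, hCi1, Matrix.transpose_one]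
    have h2 : B * Ciᵀ = 1 := by
      rw [← hCT, ← Matrix.transpose_mul, hCi2, Matrix.transpose_one]
    calc Ciᵀ = (Bi * B) * Ciᵀ := by rw [hBi2, one_mul]
    _ = Bi * (B * Ciᵀ) := by rw [mul_assoc]
    _ = Bi := by rw [h2, mul_one]
  have hQT : Q₀ᵀ = Bi * C := by rw [hQ₀, Matrix.transpose_mul, hCiT, hBT]
  have hXY : Ci * Bi = Bi * Ci := by
    have h1 : (B * C) * (Ci * Bi) = 1 := by
      calc (B * C) * (Ci * Bi) = B * (C * Ci) * Bi := by rw [mul_assoc, mul_assoc, mul_assoc]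
      _ = 1 := by rw [hCi1, mul_one, hBi1]
    have h2 : (Bi * Ci) * (C * B) = 1 := by
      calc (Bi * Ci) * (C * B) = Bi * (Ci * C) * B := by rw [mul_assoc, mul_assoc, mul_assoc]
      _ = 1 := by rw [hCi2, mul_one, hBi2]
    calc Ci * Bi = ((Bi * Ci) * (C * B)) * (Ci * Bi) := by rw [h2, one_mul]
    _ = (Bi * Ci) * ((B * C) * (Ci * Bi)) := by rw [← hcomm, mul_assoc]
    _ = Bi * Ci := by rw [h1, mul_one]
  have horth : Q₀ * Q₀ᵀ = 1 := by
    rw [hQT, hQ₀]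
    calc B * Ci * (Bi * C) = B * (Ci * Bi) * C := by rw [mul_assoc, mul_assoc, mul_assoc]
    _ = B * (Bi * Ci) * C := by rw [hXY]
    _ = (B * Bi) * (Ci * C) := by rw [mul_assoc, mul_assoc, mul_assoc]
    _ = 1 := by rw [hBi1, hCi2, one_mul]
  have hdet : Q₀.det = 1 := by
    have h2 : B.det = C.det := by rw [← hCT, Matrix.det_transpose]
    have h1 : C.det * Ci.det = 1 := by rw [← Matrix.det_mul, hCi1, Matrix.det_one]
    rw [hQ₀, Matrix.det_mul, h2, h1]
  refine ⟨Q₀, ⟨horth, hdet⟩, ?_⟩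
  have hkey : Q₀ * C = B := by rw [hQ₀, mul_assoc, hCi2, mul_one]
  have h : Q₀ - Q₀ * A = 1 + A := by
    have := hkey; rwa [hC, mul_sub, mul_one] at this
  have h3 : Q₀ * A = Q₀ - 1 - A := by
    calc Q₀ * A = Q₀ - (Q₀ - Q₀ * A) := by abel
    _ = Q₀ - (1 + A) := by rw [h]
    _ = Q₀ - 1 - A := by abel
  have hEA : Q₀ - 1 - (A + A) = (Q₀ - 1) * A := by
    rw [sub_mul, one_mul, h3]; abel
  have hE : ‖Q₀ - 1‖ ≤ 4 * ‖A‖ := by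
    have hsplit : Q₀ - 1 = (Q₀ - 1) * A + (A + A) := by rw [← hEA]; abel
    have h4 : ‖(Q₀ - 1) * A + (A + A)‖ ≤ ‖(Q₀ - 1) * A‖ + ‖A + A‖ := norm_add_le _ _
    rw [← hsplit] at h4
    have h5 : ‖(Q₀ - 1) * A‖ ≤ ‖Q₀ - 1‖ * ‖A‖ := norm_mul_le _ _
    have h6 : ‖A + A‖ ≤ ‖A‖ + ‖A‖ := norm_add_le _ _
    have h7 : ‖Q₀ - 1‖ * ‖A‖ ≤ ‖Q₀ - 1‖ * (1/2) :=
      mul_le_mul_of_nonneg_left hn (norm_nonneg _)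
    linarith
  calc ‖Q₀ - 1 - (A + A)‖ = ‖(Q₀ - 1) * A‖ := by rw [hEA]
  _ ≤ ‖Q₀ - 1‖ * ‖A‖ := norm_mul_le _ _
  _ ≤ 4 * ‖A‖ * ‖A‖ := mul_le_mul_of_nonneg_right hE (norm_nonneg _)
  _ = 4 * ‖A‖ ^ 2 := by ring

/-- for `F` a `d×d` matrix and `R ∈ SO(d)`,
`| |sym(F Rᵀ) − Id| − dist(F, SO(d)) | ≤ C |F − R|²` with a universal constant `C > 0`. -/
theorem stmt0 :
    ∃ C : ℝ, 0 < C ∧ ∀ (d : ℕ), 2 ≤ d → ∀ (F R : Matrix (Fin d) (Fin d) ℝ), R ∈ SO d →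
      |frobNorm ((1 / 2 : ℝ) • (F * Rᵀ + (F * Rᵀ)ᵀ) - 1) - distSO F|
        ≤ C * frobNorm (F - R) ^ 2 := by
  refine ⟨2, by norm_num, ?_⟩
  intro d _hd F R hR
  have hRR : R * Rᵀ = 1 := hR.1
  set G : Matrix (Fin d) (Fin d) ℝ := F * Rᵀ with hG
  set S1 : Matrix (Fin d) (Fin d) ℝ := (1 / 2 : ℝ) • (G + Gᵀ) - 1 with hS1
  set t : ℝ := ‖F - R‖ with htdef
  have ht0 : 0 ≤ t := norm_nonneg _
  -- ‖G - 1‖ = t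
  have hconv : (F - R) * Rᵀ = G - 1 := by rw [sub_mul, hRR, hG]
  have ht : ‖G - 1‖ = t := by rw [← hconv, frob_orth_right hRR]
  -- S1 = sym (G - 1)
  have hS1id : S1 = (1 / 2 : ℝ) • ((G - 1) + (G - 1)ᵀ) := by
    rw [hS1, Matrix.transpose_sub, Matrix.transpose_one]; module
  have hS1t : ‖S1‖ ≤ t := by
    rw [hS1id, ← ht]; exact sym_contract _
  have hS10 : 0 ≤ ‖S1‖ := norm_nonneg _
  -- rewrite distSO in terms of the norm
  have hdist : distSO F = sInf ((fun Q => ‖F - Q‖) '' SO d) := by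
    unfold distSO; simp only [frobNorm_eq]
  have hne : ((fun Q => ‖F - Q‖) '' SO d).Nonempty := ⟨t, R, hR, rfl⟩
  have hbdd : BddBelow ((fun Q => ‖F - Q‖) '' SO d) := by
    refine ⟨0, ?_⟩; rintro x ⟨Q, _, rfl⟩; exact norm_nonneg _
  have hDle : distSO F ≤ t := by
    rw [hdist]; exact csInf_le hbdd ⟨R, hR, rfl⟩
  -- lower bound: ‖S1‖ - 2 t² ≤ distSO F
  have hlow : ‖S1‖ - 2 * t ^ 2 ≤ distSO F := by
    rw [hdist]
    apply le_csInf hne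
    rintro b ⟨Q, hQ, rfl⟩
    have hP : Q * Rᵀ ∈ SO d := SO.mul hQ (SO.transpose hR)
    set P : Matrix (Fin d) (Fin d) ℝ := Q * Rᵀ with hPdef
    have hconv2 : (F - Q) * Rᵀ = G - P := by rw [sub_mul, hG, hPdef]
    have hx : ‖F - Q‖ = ‖G - P‖ := by rw [← hconv2, frob_orth_right hRR]
    set x : ℝ := ‖G - P‖ with hxdef
    have hx0 : 0 ≤ x := norm_nonneg _
    -- S1 = sym(G - P) + (sym P - 1)
    have hdec : S1 = (1 / 2 : ℝ) • ((G - P) + (G - P)ᵀ) + ((1 / 2 : ℝ) • (P + Pᵀ) - 1) := by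
      rw [hS1, Matrix.transpose_sub]; module
    have h1 : ‖S1‖ ≤ x + (1/2) * ‖P - 1‖ ^ 2 := by
      rw [hdec]
      calc ‖(1 / 2 : ℝ) • ((G - P) + (G - P)ᵀ) + ((1 / 2 : ℝ) • (P + Pᵀ) - 1)‖
          ≤ ‖(1 / 2 : ℝ) • ((G - P) + (G - P)ᵀ)‖ + ‖(1 / 2 : ℝ) • (P + Pᵀ) - 1‖ :=
            norm_add_le _ _
      _ ≤ x + (1/2) * ‖P - 1‖ ^ 2 := add_le_add (sym_contract _) (symSO hP)
    have h2 : ‖P - 1‖ ≤ x + t := by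
      calc ‖P - 1‖ = ‖-((G - P) - (G - 1))‖ := by congr 1; abel
      _ = ‖(G - P) - (G - 1)‖ := norm_neg _
      _ ≤ ‖G - P‖ + ‖G - 1‖ := norm_sub_le _ _
      _ = x + t := by rw [ht]
    show ‖S1‖ - 2 * t ^ 2 ≤ ‖F - Q‖
    rw [hx]
    rcases le_or_gt x t with hc | hc
    · nlinarith [norm_nonneg (P - 1)]
    · nlinarith
  -- upper bound: distSO F ≤ ‖S1‖ + 2 t²
  have hup : distSO F ≤ ‖S1‖ + 2 * t ^ 2 := by
    rcases le_or_gt t 1 with h1 | h1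
    · set A : Matrix (Fin d) (Fin d) ℝ := (1/4 : ℝ) • (G - Gᵀ) with hA
      have hskew : Aᵀ = -A := by
        rw [hA, Matrix.transpose_smul, Matrix.transpose_sub, Matrix.transpose_transpose]; module
      have hAn : ‖A‖ ≤ t / 2 := by
        have hid : G - Gᵀ = (G - 1) - (G - 1)ᵀ := by
          rw [Matrix.transpose_sub, Matrix.transpose_one]; abel
        have : ‖G - Gᵀ‖ ≤ 2 * t := by
          rw [hid]
          calc ‖(G - 1) - (G - 1)ᵀ‖ ≤ ‖G - 1‖ + ‖(G - 1)ᵀ‖ := norm_sub_le _ _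
          _ = 2 * t := by rw [Matrix.frobenius_norm_transpose, ht]; ring
        rw [hA, norm_smul, Real.norm_eq_abs]
        rw [abs_of_pos (by norm_num : (0:ℝ) < 1/4)]
        linarith
      obtain ⟨Q₀, hQ₀SO, hQ₀⟩ := cayley hskew (by linarith)
      have hmem : Q₀ * R ∈ SO d := SO.mul hQ₀SO hR
      have hle : distSO F ≤ ‖F - Q₀ * R‖ := by
        rw [hdist]; exact csInf_le hbdd ⟨Q₀ * R, hmem, rfl⟩
      have hconv3 : (F - Q₀ * R) * Rᵀ = G - Q₀ := by
        rw [sub_mul, hG, mul_assoc, hRR, mul_one]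
      have heq : ‖F - Q₀ * R‖ = ‖G - Q₀‖ := by rw [← hconv3, frob_orth_right hRR]
      have hdec2 : G - Q₀ = S1 - (Q₀ - 1 - (A + A)) := by rw [hS1, hA]; module
      have hb : ‖G - Q₀‖ ≤ ‖S1‖ + 4 * ‖A‖ ^ 2 := by
        rw [hdec2]
        calc ‖S1 - (Q₀ - 1 - (A + A))‖ ≤ ‖S1‖ + ‖Q₀ - 1 - (A + A)‖ := norm_sub_le _ _
        _ ≤ ‖S1‖ + 4 * ‖A‖ ^ 2 := by linarith
      have hA2 : 4 * ‖A‖ ^ 2 ≤ t ^ 2 := by nlinarith [norm_nonneg A]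
      calc distSO F ≤ ‖F - Q₀ * R‖ := hle
      _ = ‖G - Q₀‖ := heq
      _ ≤ ‖S1‖ + 4 * ‖A‖ ^ 2 := hb
      _ ≤ ‖S1‖ + 2 * t ^ 2 := by nlinarith
    · calc distSO F ≤ t := hDle
      _ ≤ ‖S1‖ + 2 * t ^ 2 := by nlinarith
  -- conclude
  rw [frobNorm_eq, frobNorm_eq]
  rw [abs_le]
  constructor <;> [linarith [hup]; linarith [hlow]]
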